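/- Let X be a separable Banach space with topological dual X*, and let (xₙ) be a sequence that is dense in the closed unit ball of X. For n ∈ ℕ define fₙ : X* → ℝ by fₙ(x*) = x*(xₙ). Then the Borel σ-field on X* generated by the weak-star topology equals the σ-field σ(fₙ : n ∈ ℕ) generated by the functionals fₙ. -/
import Mathlib


/-- Let `X` be a separable Banach space and let `(xₙ)` be a sequence dense in the closed
unit ball of `X`.  Then the Borel σ-field of the weak-star topology on the dual `X*`
coincides with the σ-field generated by the evaluation functionals `fₙ(φ) = φ(xₙ)`. -/
theorem borel_weakstar_eq_sigma_evaluations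
    {X : Type*} [NormedAddCommGroup X] [NormedSpace ℝ X] [CompleteSpace X]
    [TopologicalSpace.SeparableSpace X]
    (x : ℕ → X) (hx : ∀ n, ‖x n‖ ≤ 1)
    (hdense : Metric.closedBall (0 : X) 1 ⊆ closure (Set.range x)) :
    borel (WeakDual ℝ X)
      = ⨆ n : ℕ, MeasurableSpace.comap (fun φ : WeakDual ℝ X => φ (x n)) (borel ℝ) := by
  have hRborel : (borel ℝ) = (inferInstance : MeasurableSpace ℝ) :=
    (BorelSpace.measurable_eq (α := ℝ)).symm
  set M : MeasurableSpace (WeakDual ℝ X) :=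
    ⨆ n : ℕ, MeasurableSpace.comap (fun φ : WeakDual ℝ X => φ (x n)) (borel ℝ) with hM
  set Φ : WeakDual ℝ X → (ℕ → ℝ) := fun φ n => φ (x n) with hΦ
  -- Φ is injective
  have hΦinj : Function.Injective Φ := by
    intro φ ψ h
    have hball : ∀ y ∈ Metric.closedBall (0 : X) 1, φ y = ψ y := by
      intro y hy
      have heq : Set.EqOn (⇑φ) (⇑ψ) (Set.range x) := by
        rintro _ ⟨n, rfl⟩
        exact congrFun h n
      exact heq.closure (map_continuous φ) (map_continuous ψ) (hdense hy)
    have hall : ∀ y : X, φ y = ψ y := by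
      intro y
      rcases eq_or_ne y 0 with rfl | hy0
      · simpa using hball 0 (by simp)
      · have hn : ‖y‖ ≠ 0 := norm_ne_zero_iff.2 hy0
        have hmem : (‖y‖⁻¹ • y) ∈ Metric.closedBall (0 : X) 1 := by
          simp [norm_smul, abs_of_nonneg (inv_nonneg.2 (norm_nonneg y)),
            inv_mul_cancel₀ hn]
        have hb := hball _ hmem
        have h1 : φ y = ‖y‖ • φ (‖y‖⁻¹ • y) := by rw [← map_smul, smul_inv_smul₀ hn]
        have h2 : ψ y = ‖y‖ • ψ (‖y‖⁻¹ • y) := by rw [← map_smul, smul_inv_smul₀ hn]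
        rw [h1, h2, hb]
    exact DFunLike.ext _ _ hall
  have hΦcont : Continuous Φ := continuous_pi fun n => WeakDual.eval_continuous (x n)
  have hΦmeas : @Measurable _ _ M _ Φ := by
    refine measurable_pi_lambda _ fun n => ?_
    have : MeasurableSpace.comap (fun φ : WeakDual ℝ X => φ (x n)) (borel ℝ) ≤ M :=
      le_iSup (fun n => MeasurableSpace.comap (fun φ : WeakDual ℝ X => φ (x n)) (borel ℝ)) n
    rw [hRborel] at this
    exact Measurable.of_comap_le this
  refine le_antisymm ?_ ?_
  · -- borel ≤ M : every open set is M-measurable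
    rw [borel]
    refine MeasurableSpace.generateFrom_le fun U hU => ?_
    have hUopen : IsOpen U := hU
    -- decompose into balls
    have hcover : U = ⋃ m : ℕ, U ∩ (WeakDual.toStrongDual ⁻¹' Metric.closedBall 0 (m : ℝ)) := by
      ext φ
      simp only [Set.mem_iUnion, Set.mem_inter_iff, Set.mem_preimage,
        Metric.mem_closedBall, dist_zero_right]
      constructor
      · intro hφ
        exact ⟨⌈‖WeakDual.toStrongDual φ‖⌉₊, hφ, Nat.le_ceil _⟩
      · rintro ⟨m, hm, _⟩
        exact hm
    rw [hcover]
    refine MeasurableSet.iUnion fun m => ?_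
    set K : Set (WeakDual ℝ X) := WeakDual.toStrongDual ⁻¹' Metric.closedBall 0 (m : ℝ) with hK
    have hKcomp : IsCompact K := WeakDual.isCompact_closedBall (𝕜 := ℝ) (0 : StrongDual ℝ X) (m : ℝ)
    have hKU : IsCompact (K \ U) := hKcomp.diff hUopen
    have himg : Φ '' (U ∩ K) = Φ '' K \ Φ '' (K \ U) := by
      rw [← Set.image_diff hΦinj, Set.diff_diff_right_self, Set.inter_comm]
    have hB : MeasurableSet (Φ '' (U ∩ K)) := by
      rw [himg]
      exact ((hKcomp.image hΦcont).isClosed.measurableSet).diff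
        ((hKU.image hΦcont).isClosed.measurableSet)
    have hpre : U ∩ K = Φ ⁻¹' (Φ '' (U ∩ K)) := (Set.preimage_image_eq _ hΦinj).symm
    rw [hpre]
    exact hΦmeas hB
  · -- M ≤ borel
    refine iSup_le fun n => ?_
    rw [hRborel]
    letI : MeasurableSpace (WeakDual ℝ X) := borel (WeakDual ℝ X)
    haveI : BorelSpace (WeakDual ℝ X) := ⟨rfl⟩
    exact ((WeakDual.eval_continuous (x n)).measurable).comap_le
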